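/- Let Δ₁ and Δ₂ be runtime type environments whose sets of session names are disjoint, such that each of Δ₁ and Δ₂ is safe. Then the combined environment Δ₁, Δ₂ is safe. -/

import Mathlib

/- Runtime type environments of the Maty multiparty session type system.
Environments map session endpoints `s[p]` to local session types and session
names `s` to queue types; the environment reduction relation is the
asynchronous LTS (send, receive, end, recursion unfolding), taken modulo queue
congruence.  Safety is the largest property satisfying the head-message
condition, closure under unfolding, and closure under reduction.
Deadlock-freedom requires every maximal reduction sequence to end in a single
empty queue. -/

abbrev Role := ℕ
abbrev Label := ℕ
abbrev Ty := ℕ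

/-- Local session types: selection ⊕, branching &, recursion μ (de Bruijn),
variables, and end.  Branches are given by a decidable label set `dom`, a
payload-type assignment `pay` and continuations `cont`. -/
inductive SessionTy : Type where
  | select (q : Role) (dom : Label → Bool) (pay : Label → Ty) (cont : Label → SessionTy)
  | branch (q : Role) (dom : Label → Bool) (pay : Label → Ty) (cont : Label → SessionTy)
  | mu (S : SessionTy)
  | var (n : ℕ)
  | endS

/-- Substitution `S[T / var k]` (used only for unfolding recursive types). -/
def SessionTy.subst : SessionTy → ℕ → SessionTy → SessionTy
  | .select q d p c, k, T => .select q d p (fun l => (c l).subst k T)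
  | .branch q d p c, k, T => .branch q d p (fun l => (c l).subst k T)
  | .mu S, k, T => .mu (S.subst (k+1) T)
  | .var n, k, T => if n = k then T else .var n
  | .endS, _, _ => .endS

/-- Unfolding of a recursive type: `unfold (μX.S) = S[μX.S/X]`. -/
def SessionTy.unfold : SessionTy → SessionTy
  | .mu S => S.subst 0 (.mu S)
  | S => S

structure QEntry where
  sender : Role
  receiver : Role
  label : Label
  payload : Ty
deriving DecidableEq

abbrev Queue := List QEntry

/-- Swap of adjacent queue entries with distinct (sender, receiver) pairs. -/
inductive QSwap : Queue → Queue → Prop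
  | swap (Q₁ Q₂ : Queue) (e₁ e₂ : QEntry)
      (h : e₁.sender ≠ e₂.sender ∨ e₁.receiver ≠ e₂.receiver) :
      QSwap (Q₁ ++ e₁ :: e₂ :: Q₂) (Q₁ ++ e₂ :: e₁ :: Q₂)

/-- Queue congruence. -/
def QCong : Queue → Queue → Prop := Relation.EqvGen QSwap

abbrev SName := ℕ

/-- Environment entries: session endpoints `s[p] : S` and queues `s : Q`. -/
inductive EnvEntry : Type where
  | ep (s : SName) (p : Role) (S : SessionTy)
  | qu (s : SName) (Q : Queue)

/-- Runtime type environments (unordered collections of entries). -/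
abbrev Env := Multiset EnvEntry

/-- Congruence on entries: queue types may be permuted by queue congruence. -/
inductive EntryCong : EnvEntry → EnvEntry → Prop
  | ep {s p S} : EntryCong (.ep s p S) (.ep s p S)
  | qu {s Q Q'} : QCong Q Q' → EntryCong (.qu s Q) (.qu s Q')

/-- Congruence on environments: pointwise congruence of entries. -/
def EnvCong : Env → Env → Prop := Multiset.Rel EntryCong

/-- One labelled step of the LTS on runtime type environments. -/
inductive EStep : Env → Env → Prop
  | send (Δ : Env) (s : SName) (p q : Role) (ℓ : Label)
      (d : Label → Bool) (pay : Label → Ty) (cont : Label → SessionTy) (Q : Queue)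
      (h : d ℓ = true) :
      EStep (EnvEntry.ep s p (.select q d pay cont) ::ₘ EnvEntry.qu s Q ::ₘ Δ)
            (EnvEntry.ep s p (cont ℓ) ::ₘ EnvEntry.qu s (Q ++ [⟨p, q, ℓ, pay ℓ⟩]) ::ₘ Δ)
  | recv (Δ : Env) (s : SName) (p q : Role) (ℓ : Label)
      (d : Label → Bool) (pay : Label → Ty) (cont : Label → SessionTy) (Q : Queue)
      (h : d ℓ = true) :
      EStep (EnvEntry.ep s p (.branch q d pay cont) ::ₘ
               EnvEntry.qu s (⟨q, p, ℓ, pay ℓ⟩ :: Q) ::ₘ Δ)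
            (EnvEntry.ep s p (cont ℓ) ::ₘ EnvEntry.qu s Q ::ₘ Δ)
  | done (Δ : Env) (s : SName) (p : Role) :
      EStep (EnvEntry.ep s p .endS ::ₘ Δ) Δ
  | unfold (Δ Δ' : Env) (s : SName) (p : Role) (S : SessionTy)
      (h : EStep (EnvEntry.ep s p (SessionTy.mu S).unfold ::ₘ Δ) Δ') :
      EStep (EnvEntry.ep s p (.mu S) ::ₘ Δ) Δ'

/-- Environment reduction `Δ ⟹ Δ'`: a labelled step taken modulo congruence. -/
def ERed (Δ Δ' : Env) : Prop :=
  ∃ Δ₁ Δ₂, EnvCong Δ Δ₁ ∧ EStep Δ₁ Δ₂ ∧ EnvCong Δ₂ Δ'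

/-- Head-message condition: any receivable head message at a branching endpoint
matches a declared branch with equal payload type. -/
def HeadSafe (Δ : Env) : Prop :=
  ∀ (s : SName) (p q : Role) (d : Label → Bool) (pay : Label → Ty)
      (cont : Label → SessionTy) (Q : Queue),
    EnvEntry.ep s p (.branch q d pay cont) ∈ Δ →
    EnvEntry.qu s Q ∈ Δ →
    ∀ (ℓ : Label) (B : Ty) (Q' : Queue), QCong Q (⟨q, p, ℓ, B⟩ :: Q') →
      d ℓ = true ∧ B = pay ℓ

/-- A safety property: satisfies the head-message condition, is closed under
unfolding of recursive endpoint types, and is preserved by reduction. -/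
def IsSafetyProp (φ : Env → Prop) : Prop :=
  ∀ Δ, φ Δ →
    HeadSafe Δ ∧
    (∀ (Δ' : Env) (s : SName) (p : Role) (S : SessionTy),
        Δ = EnvEntry.ep s p (.mu S) ::ₘ Δ' →
        φ (EnvEntry.ep s p (SessionTy.mu S).unfold ::ₘ Δ')) ∧
    (∀ Δ', ERed Δ Δ' → φ Δ')

/-- Safety: the largest safety property. -/
def EnvSafe (Δ : Env) : Prop := ∃ φ, IsSafetyProp φ ∧ φ Δ

/-- Deadlock-freedom: every maximal reduction sequence ends in a single empty
queue `s : ε`. -/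
def DeadlockFree (Δ : Env) : Prop :=
  ∀ Δ', Relation.ReflTransGen ERed Δ Δ' → (∀ Δ'', ¬ ERed Δ' Δ'') →
    ∃ s, Δ' = {EnvEntry.qu s []}

/-- The session name of an entry. -/
def EnvEntry.sname : EnvEntry → SName
  | .ep s _ _ => s
  | .qu s _ => s

/-- The set of session names occurring in an environment. -/
def snames (Δ : Env) : Set SName := { s | ∃ e ∈ Δ, EnvEntry.sname e = s }

/-- Compliance: safety together with deadlock-freedom. -/
def Compliant (Δ : Env) : Prop := EnvSafe Δ ∧ DeadlockFree Δ


section SafeAux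

lemma entryCong_refl (e : EnvEntry) : EntryCong e e := by
  cases e with
  | ep s p S => exact .ep
  | qu s Q => exact .qu (Relation.EqvGen.refl Q)

instance : IsRefl EnvEntry EntryCong := ⟨entryCong_refl⟩

instance : Std.Symm EntryCong := ⟨by
  intro a b h
  cases h with
  | ep => exact .ep
  | qu h => exact .qu (Relation.EqvGen.symm _ _ h)⟩

instance : IsTrans EnvEntry EntryCong := ⟨by
  intro a b c h1 h2
  cases h1 with
  | ep => exact h2
  | qu h1 =>
    cases h2 with
    | qu h2 => exact .qu (Relation.EqvGen.trans _ _ _ h1 h2)⟩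

lemma envCong_refl (Δ : Env) : EnvCong Δ Δ := by
  induction Δ using Multiset.induction_on with
  | empty => exact Multiset.Rel.zero
  | cons e Δ ih => exact Multiset.Rel.cons (entryCong_refl e) ih

lemma envCong_symm {Δ Δ' : Env} (h : EnvCong Δ Δ') : EnvCong Δ' Δ := by
  induction h with
  | zero => exact Multiset.Rel.zero
  | cons h _ ih => exact Multiset.Rel.cons (Std.Symm.symm _ _ h) ih

lemma envCong_trans {Δ₁ Δ₂ Δ₃ : Env} (h1 : EnvCong Δ₁ Δ₂) (h2 : EnvCong Δ₂ Δ₃) :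
    EnvCong Δ₁ Δ₃ := Multiset.Rel.trans EntryCong h1 h2

lemma entryCong_sname {e e' : EnvEntry} (h : EntryCong e e') :
    e.sname = e'.sname := by cases h <;> rfl

lemma snames_cong {Δ Δ' : Env} (h : EnvCong Δ Δ') : snames Δ = snames Δ' := by
  ext x
  constructor
  · rintro ⟨e, he, rfl⟩
    obtain ⟨e', he', hc⟩ := Multiset.exists_mem_of_rel_of_mem h he
    exact ⟨e', he', (entryCong_sname hc).symm⟩
  · rintro ⟨e, he, rfl⟩
    obtain ⟨e', he', hc⟩ := Multiset.exists_mem_of_rel_of_mem (envCong_symm h) he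
    exact ⟨e', he', (entryCong_sname hc).symm⟩

lemma mem_snames_cons {x : SName} {e : EnvEntry} {Δ : Env} :
    x ∈ snames (e ::ₘ Δ) ↔ x = e.sname ∨ x ∈ snames Δ := by
  constructor
  · rintro ⟨f, hf, rfl⟩
    rcases Multiset.mem_cons.1 hf with rfl | hf
    · exact Or.inl rfl
    · exact Or.inr ⟨f, hf, rfl⟩
  · rintro (rfl | ⟨f, hf, rfl⟩)
    · exact ⟨e, Multiset.mem_cons_self _ _, rfl⟩
    · exact ⟨f, Multiset.mem_cons_of_mem hf, rfl⟩

lemma estep_snames {Γ Γ' : Env} (h : EStep Γ Γ') : snames Γ' ⊆ snames Γ := by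
  induction h with
  | send Δ s p q ℓ d pay cont Q hd =>
    intro x hx
    simp only [mem_snames_cons, EnvEntry.sname] at hx ⊢
    tauto
  | recv Δ s p q ℓ d pay cont Q hd =>
    intro x hx
    simp only [mem_snames_cons, EnvEntry.sname] at hx ⊢
    tauto
  | done Δ s p =>
    intro x hx
    exact mem_snames_cons.2 (Or.inr hx)
  | unfold Δ Δ' s p S h ih =>
    intro x hx
    have := ih hx
    simp only [mem_snames_cons, EnvEntry.sname] at this ⊢
    tauto

/-- A single unfolding of a recursive endpoint type inside an environment. -/
def Unf1 (Δ Δ' : Env) : Prop :=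
  ∃ C s p S, Δ = EnvEntry.ep s p (.mu S) ::ₘ C ∧
    Δ' = EnvEntry.ep s p (SessionTy.mu S).unfold ::ₘ C

def Unf : Env → Env → Prop := Relation.ReflTransGen Unf1

lemma unf1_snames {Δ Δ' : Env} (h : Unf1 Δ Δ') : snames Δ' = snames Δ := by
  obtain ⟨C, s, p, S, rfl, rfl⟩ := h
  ext x
  simp only [mem_snames_cons, EnvEntry.sname]

lemma unf_snames {Δ Δ' : Env} (h : Unf Δ Δ') : snames Δ' = snames Δ := by
  induction h with
  | refl => rfl
  | tail _ h ih => rw [unf1_snames h, ih]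

lemma envSafe_head {Δ : Env} (h : EnvSafe Δ) : HeadSafe Δ := by
  obtain ⟨φ, hφ, hΔ⟩ := h
  exact (hφ _ hΔ).1

lemma envSafe_unf1 {Δ Δ' : Env} (h : Unf1 Δ Δ') (hs : EnvSafe Δ) : EnvSafe Δ' := by
  obtain ⟨C, s, p, S, rfl, rfl⟩ := h
  obtain ⟨φ, hφ, hΔ⟩ := hs
  exact ⟨φ, hφ, (hφ _ hΔ).2.1 C s p S rfl⟩

lemma envSafe_unf {Δ Δ' : Env} (h : Unf Δ Δ') (hs : EnvSafe Δ) : EnvSafe Δ' := by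
  induction h with
  | refl => exact hs
  | tail _ h ih => exact envSafe_unf1 h ih

lemma envSafe_red {Δ Δ' : Env} (h : ERed Δ Δ') (hs : EnvSafe Δ) : EnvSafe Δ' := by
  obtain ⟨φ, hφ, hΔ⟩ := hs
  exact ⟨φ, hφ, (hφ _ hΔ).2.2 _ h⟩

/-- Safety is closed under environment congruence. -/
lemma envSafe_cong {Δ Δ' : Env} (hc : EnvCong Δ Δ') (hs : EnvSafe Δ) : EnvSafe Δ' := by
  refine ⟨fun Γ => ∃ Γ₀, EnvCong Γ Γ₀ ∧ EnvSafe Γ₀, ?_, Δ, envCong_symm hc, hs⟩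
  rintro Γ ⟨Γ₀, hcong, hsafe⟩
  refine ⟨?_, ?_, ?_⟩
  · intro s p q d pay cont Q hep hqu ℓ B Q' hQ
    obtain ⟨e₁, he₁, hc₁⟩ := Multiset.exists_mem_of_rel_of_mem hcong hep
    obtain ⟨e₂, he₂, hc₂⟩ := Multiset.exists_mem_of_rel_of_mem hcong hqu
    cases hc₁
    cases hc₂ with
    | qu hq =>
      exact envSafe_head hsafe s p q d pay cont _ he₁ he₂ ℓ B Q'
        (Relation.EqvGen.trans _ _ _ (Relation.EqvGen.symm _ _ hq) hQ)
  · rintro Γ' s p S rfl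
    obtain ⟨b, t', hb, ht', rfl⟩ := Multiset.rel_cons_left.1 hcong
    cases hb
    exact ⟨_, Multiset.Rel.cons EntryCong.ep ht',
      envSafe_unf1 ⟨t', s, p, S, rfl, rfl⟩ hsafe⟩
  · rintro Γ' ⟨Δa, Δb, c1, st, c2⟩
    exact ⟨Γ', envCong_refl _,
      envSafe_red ⟨Δa, Δb, envCong_trans (envCong_symm hcong) c1, st, c2⟩ hsafe⟩

lemma add_cons' {A C : Env} (e : EnvEntry) : A + (e ::ₘ C) = e ::ₘ (A + C) := by
  rw [add_comm, Multiset.cons_add, add_comm]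

lemma add_cons_cons {A C : Env} (e₁ e₂ : EnvEntry) :
    A + (e₁ ::ₘ e₂ ::ₘ C) = e₁ ::ₘ e₂ ::ₘ (A + C) := by
  rw [add_cons', add_cons']

lemma extract1 {e : EnvEntry} {Δ A B : Env} (h : e ::ₘ Δ = A + B) :
    (∃ C, A = e ::ₘ C ∧ Δ = C + B) ∨ (∃ C, B = e ::ₘ C ∧ Δ = A + C) := by
  have he : e ∈ A + B := h ▸ Multiset.mem_cons_self e Δ
  rcases Multiset.mem_add.1 he with hA | hB
  · obtain ⟨C, rfl⟩ := Multiset.exists_cons_of_mem hA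
    refine Or.inl ⟨C, rfl, ?_⟩
    have h' : e ::ₘ Δ = e ::ₘ (C + B) := by rwa [Multiset.cons_add] at h
    exact (Multiset.cons_inj_right e).1 h'
  · obtain ⟨C, rfl⟩ := Multiset.exists_cons_of_mem hB
    refine Or.inr ⟨C, rfl, ?_⟩
    have h' : e ::ₘ Δ = e ::ₘ (A + C) := by rwa [add_cons'] at h
    exact (Multiset.cons_inj_right e).1 h'

lemma extract2 {e₁ e₂ : EnvEntry} {Δ A B : Env} (h : e₁ ::ₘ e₂ ::ₘ Δ = A + B)
    (hname : e₁.sname = e₂.sname)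
    (hdisj : Disjoint (snames A) (snames B)) :
    (∃ C, A = e₁ ::ₘ e₂ ::ₘ C ∧ Δ = C + B) ∨
    (∃ C, B = e₁ ::ₘ e₂ ::ₘ C ∧ Δ = A + C) := by
  rcases extract1 h with ⟨C, rfl, hΔ⟩ | ⟨C, rfl, hΔ⟩
  · rcases extract1 hΔ with ⟨D, rfl, hΔ'⟩ | ⟨D, hB, hΔ'⟩
    · exact Or.inl ⟨D, rfl, hΔ'⟩
    · exfalso
      have h1 : e₁.sname ∈ snames (e₁ ::ₘ C) := ⟨e₁, Multiset.mem_cons_self _ _, rfl⟩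
      have h2 : e₁.sname ∈ snames B :=
        ⟨e₂, by rw [hB]; exact Multiset.mem_cons_self _ _, hname.symm⟩
      exact (Set.disjoint_left.1 hdisj h1) h2
  · rcases extract1 hΔ with ⟨D, hA, hΔ'⟩ | ⟨D, rfl, hΔ'⟩
    · exfalso
      have h2 : e₁.sname ∈ snames (e₁ ::ₘ C) := ⟨e₁, Multiset.mem_cons_self _ _, rfl⟩
      have h1 : e₁.sname ∈ snames A :=
        ⟨e₂, by rw [hA]; exact Multiset.mem_cons_self _ _, hname.symm⟩
      exact (Set.disjoint_left.1 hdisj h1) h2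
    · exact Or.inr ⟨D, rfl, hΔ'⟩

/-- Every step of a combined environment with disjoint session names is a step
of one component, possibly combined with unfoldings in the other component. -/
lemma step_decomp {Γ Γ' : Env} (h : EStep Γ Γ') :
    ∀ A B, Γ = A + B → Disjoint (snames A) (snames B) →
      (∃ A' B', EStep A A' ∧ Unf B B' ∧ Γ' = A' + B') ∨
      (∃ A' B', Unf A A' ∧ EStep B B' ∧ Γ' = A' + B') := by
  induction h with
  | send Δ s p q ℓ d pay cont Q hd =>
    intro A B hAB hdisj
    rcases extract2 hAB rfl hdisj with ⟨C, rfl, rfl⟩ | ⟨C, rfl, rfl⟩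
    · exact Or.inl ⟨_, B, EStep.send C s p q ℓ d pay cont Q hd,
        Relation.ReflTransGen.refl, by rw [Multiset.cons_add, Multiset.cons_add]⟩
    · exact Or.inr ⟨A, _, Relation.ReflTransGen.refl,
        EStep.send C s p q ℓ d pay cont Q hd, (add_cons_cons _ _).symm⟩
  | recv Δ s p q ℓ d pay cont Q hd =>
    intro A B hAB hdisj
    rcases extract2 hAB rfl hdisj with ⟨C, rfl, rfl⟩ | ⟨C, rfl, rfl⟩
    · exact Or.inl ⟨_, B, EStep.recv C s p q ℓ d pay cont Q hd,
        Relation.ReflTransGen.refl, by rw [Multiset.cons_add, Multiset.cons_add]⟩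
    · exact Or.inr ⟨A, _, Relation.ReflTransGen.refl,
        EStep.recv C s p q ℓ d pay cont Q hd, (add_cons_cons _ _).symm⟩
  | done Δ s p =>
    intro A B hAB hdisj
    rcases extract1 hAB with ⟨C, rfl, rfl⟩ | ⟨C, rfl, rfl⟩
    · exact Or.inl ⟨C, B, EStep.done C s p, Relation.ReflTransGen.refl, rfl⟩
    · exact Or.inr ⟨A, C, Relation.ReflTransGen.refl, EStep.done C s p, rfl⟩
  | unfold Δ Δ' s p S h ih =>
    intro A B hAB hdisj
    rcases extract1 hAB with ⟨C, rfl, rfl⟩ | ⟨C, rfl, rfl⟩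
    · have hu : Unf1 (EnvEntry.ep s p (.mu S) ::ₘ C)
          (EnvEntry.ep s p (SessionTy.mu S).unfold ::ₘ C) := ⟨C, s, p, S, rfl, rfl⟩
      have hdisj' : Disjoint (snames (EnvEntry.ep s p (SessionTy.mu S).unfold ::ₘ C))
          (snames B) := by rw [unf1_snames hu]; exact hdisj
      rcases ih (EnvEntry.ep s p (SessionTy.mu S).unfold ::ₘ C) B
          (by rw [Multiset.cons_add]) hdisj' with
        ⟨A'', B', st'', unfB, rfl⟩ | ⟨A'', B', unfA, stB, rfl⟩
      · exact Or.inl ⟨A'', B', EStep.unfold C A'' s p S st'', unfB, rfl⟩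
      · exact Or.inr ⟨A'', B', Relation.ReflTransGen.head hu unfA, stB, rfl⟩
    · have hu : Unf1 (EnvEntry.ep s p (.mu S) ::ₘ C)
          (EnvEntry.ep s p (SessionTy.mu S).unfold ::ₘ C) := ⟨C, s, p, S, rfl, rfl⟩
      have hdisj' : Disjoint (snames A)
          (snames (EnvEntry.ep s p (SessionTy.mu S).unfold ::ₘ C)) := by
        rw [unf1_snames hu]; exact hdisj
      rcases ih A (EnvEntry.ep s p (SessionTy.mu S).unfold ::ₘ C)
          (by rw [add_cons']) hdisj' with
        ⟨A', B'', stA, unfB, rfl⟩ | ⟨A', B'', unfA, st, rfl⟩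
      · exact Or.inl ⟨A', B'', stA, Relation.ReflTransGen.head hu unfB, rfl⟩
      · exact Or.inr ⟨A', B'', unfA, EStep.unfold C B'' s p S st, rfl⟩

end SafeAux

/-- if `Δ₁` and `Δ₂` have disjoint session names and each is
safe, then the combined environment `Δ₁ + Δ₂` is safe. -/
theorem safe_add_of_safe (Δ₁ Δ₂ : Env)
    (hdisj : Disjoint (snames Δ₁) (snames Δ₂))
    (h₁ : EnvSafe Δ₁) (h₂ : EnvSafe Δ₂) : EnvSafe (Δ₁ + Δ₂) :=  by
  refine ⟨fun Γ => ∃ A B, Γ = A + B ∧ Disjoint (snames A) (snames B) ∧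
      EnvSafe A ∧ EnvSafe B, ?_, Δ₁, Δ₂, rfl, hdisj, h₁, h₂⟩
  rintro Γ ⟨A, B, rfl, hd, hA, hB⟩
  refine ⟨?_, ?_, ?_⟩
  · intro s p q d pay cont Q hep hqu ℓ Bt Q' hQ
    rcases Multiset.mem_add.1 hep with hep | hep <;>
      rcases Multiset.mem_add.1 hqu with hqu | hqu
    · exact envSafe_head hA s p q d pay cont Q hep hqu ℓ Bt Q' hQ
    · exact absurd (⟨_, hqu, rfl⟩ : s ∈ snames B)
        (Set.disjoint_left.1 hd ⟨_, hep, rfl⟩)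
    · exact absurd (⟨_, hqu, rfl⟩ : s ∈ snames A)
        (Set.disjoint_right.1 hd ⟨_, hep, rfl⟩)
    · exact envSafe_head hB s p q d pay cont Q hep hqu ℓ Bt Q' hQ
  · rintro Γ' s p S heq
    rcases extract1 heq.symm with ⟨C, rfl, rfl⟩ | ⟨C, rfl, rfl⟩
    · have hu : Unf1 (EnvEntry.ep s p (.mu S) ::ₘ C)
          (EnvEntry.ep s p (SessionTy.mu S).unfold ::ₘ C) := ⟨C, s, p, S, rfl, rfl⟩
      exact ⟨EnvEntry.ep s p (SessionTy.mu S).unfold ::ₘ C, B,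
        (Multiset.cons_add _ _ _).symm,
        by rw [unf1_snames hu]; exact hd, envSafe_unf1 hu hA, hB⟩
    · have hu : Unf1 (EnvEntry.ep s p (.mu S) ::ₘ C)
          (EnvEntry.ep s p (SessionTy.mu S).unfold ::ₘ C) := ⟨C, s, p, S, rfl, rfl⟩
      exact ⟨A, EnvEntry.ep s p (SessionTy.mu S).unfold ::ₘ C,
        (add_cons' _).symm,
        by rw [unf1_snames hu]; exact hd, hA, envSafe_unf1 hu hB⟩
  · rintro Γ' ⟨Δa, Δb, c1, st, c2⟩
    obtain ⟨A₀, B₀, cA, cB, rfl⟩ := Multiset.rel_add_left.1 c1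
    have hd₀ : Disjoint (snames A₀) (snames B₀) := by
      rw [← snames_cong cA, ← snames_cong cB]; exact hd
    rcases step_decomp st A₀ B₀ rfl hd₀ with
      ⟨A', B', stA, unfB, rfl⟩ | ⟨A', B', unfA, stB, rfl⟩
    · obtain ⟨A₁, B₁, cA', cB', rfl⟩ := Multiset.rel_add_left.1 c2
      have hA1 : snames A₁ ⊆ snames A := by
        rw [← snames_cong cA', snames_cong cA]
        exact estep_snames stA
      have hB1 : snames B₁ = snames B := by
        rw [← snames_cong cB', unf_snames unfB, ← snames_cong cB]
      exact ⟨A₁, B₁, rfl, hd.mono hA1 (le_of_eq hB1),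
        envSafe_red ⟨A₀, A', cA, stA, cA'⟩ hA,
        envSafe_cong cB' (envSafe_unf unfB (envSafe_cong cB hB))⟩
    · obtain ⟨A₁, B₁, cA', cB', rfl⟩ := Multiset.rel_add_left.1 c2
      have hA1 : snames A₁ = snames A := by
        rw [← snames_cong cA', unf_snames unfA, ← snames_cong cA]
      have hB1 : snames B₁ ⊆ snames B := by
        rw [← snames_cong cB', snames_cong cB]
        exact estep_snames stB
      exact ⟨A₁, B₁, rfl, hd.mono (le_of_eq hA1) hB1,
        envSafe_cong cA' (envSafe_unf unfA (envSafe_cong cA hA)),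
        envSafe_red ⟨B₀, B', cB, stB, cB'⟩ hB⟩
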